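/- Let τ, α, μ > 0, set β = α/τ and θ = μ²/τ, let k ∈ ℂ, and let Λ(k) be the 2×2 matrix with rows (0, ik) and (ikβ, θk² + 1/τ). Let e, q, f : ℝ × ℝ → ℂ be twice continuously differentiable and satisfy ∂ₜe + ∂ₓq = f and τ·∂ₜq + q − μ²·∂ₓ²q + α·∂ₓe = 0 on ℝ². Define u(x,t) = (e(x,t), q(x,t))ᵀ, F(x,t) = (f(x,t), 0)ᵀ, and (Xu)(x,t) = (−q(x,t), −β·e(x,t) + θ·(ik·q(x,t) + ∂ₓq(x,t)))ᵀ. Then at every (x,t) the matrix local relation holds: ∂ₜ[ e^{−ikx}·exp(Λ(k)·t)·u(x,t) ] − ∂ₓ[ e^{−ikx}·exp(Λ(k)·t)·(Xu)(x,t) ] = e^{−ikx}·exp(Λ(k)·t)·F(x,t), where exp denotes the matrix exponential. -/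

import Mathlib

open Complex Matrix

/-- Partial derivative in the spatial variable `x` (first coordinate),
for vector-valued functions. -/
noncomputable def px {E : Type*} [NormedAddCommGroup E] [NormedSpace ℝ E]
    (u : ℝ × ℝ → E) : ℝ × ℝ → E :=
  fun p => deriv (fun x => u (x, p.2)) p.1

/-- Partial derivative in the time variable `t` (second coordinate),
for vector-valued functions. -/
noncomputable def pt {E : Type*} [NormedAddCommGroup E] [NormedSpace ℝ E]
    (u : ℝ × ℝ → E) : ℝ × ℝ → E :=
  fun p => deriv (fun t => u (p.1, t)) p.2

/-- The symbol matrix `Λ(k)` of the one-dimensional Guyer–Krumhansl system,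
written with `β = α/τ` and `θ = μ²/τ`. -/
noncomputable def GKLambda (τ β θ : ℝ) (k : ℂ) : Matrix (Fin 2) (Fin 2) ℂ :=
  !![0, I * k;
     I * k * (β : ℂ), (θ : ℂ) * k^2 + 1 / (τ : ℂ)]


private lemma entry_hasDerivAt (A : Matrix (Fin 2) (Fin 2) ℂ) (t : ℝ) (i j : Fin 2) :
    HasDerivAt (fun s : ℝ => NormedSpace.exp ((s : ℂ) • A) i j)
      ((NormedSpace.exp ((t : ℂ) • A) * A) i j) t := by
  letI : SeminormedRing (Matrix (Fin 2) (Fin 2) ℂ) := Matrix.linftyOpSemiNormedRing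
  letI : NormedRing (Matrix (Fin 2) (Fin 2) ℂ) := Matrix.linftyOpNormedRing
  letI : NormedAlgebra ℂ (Matrix (Fin 2) (Fin 2) ℂ) := Matrix.linftyOpNormedAlgebra
  have H0 := hasDerivAt_exp_smul_const (𝕂 := ℂ) A (t : ℂ)
  let L : Matrix (Fin 2) (Fin 2) ℂ →ₗ[ℂ] ℂ :=
    { toFun := fun M => M i j, map_add' := fun _ _ => rfl, map_smul' := fun _ _ => rfl }
  have H1 : HasDerivAt (fun u : ℂ => NormedSpace.exp (u • A) i j)
      ((NormedSpace.exp ((t:ℂ) • A) * A) i j) (t : ℂ) :=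
    (LinearMap.toContinuousLinearMap L).hasFDerivAt.comp_hasDerivAt _ H0
  exact H1.comp_ofReal

private lemma hasDerivAt_px' {g : ℝ × ℝ → ℂ} (hg : Differentiable ℝ g) (x t : ℝ) :
    HasDerivAt (fun x' => g (x', t)) (px g (x, t)) x :=
  ((hg.comp (differentiable_id.prodMk (differentiable_const t))) x).hasDerivAt

private lemma hasDerivAt_pt' {g : ℝ × ℝ → ℂ} (hg : Differentiable ℝ g) (x t : ℝ) :
    HasDerivAt (fun t' => g (x, t')) (pt g (x, t)) t :=
  ((hg.comp ((differentiable_const x).prodMk differentiable_id)) t).hasDerivAt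

private lemma px_eq_fderiv {g : ℝ × ℝ → ℂ} (hg : Differentiable ℝ g) :
    px g = fun p => fderiv ℝ g p (1, 0) := by
  funext p
  have h : HasDerivAt (fun x' => g (x', p.2)) (fderiv ℝ g p (1, 0)) p.1 :=
    (hg p).hasFDerivAt.comp_hasDerivAt p.1 ((hasDerivAt_id p.1).prodMk (hasDerivAt_const p.1 p.2))
  exact h.deriv

private lemma px_differentiable {g : ℝ × ℝ → ℂ} (hg : ContDiff ℝ 2 g) :
    Differentiable ℝ (px g) := by
  rw [px_eq_fderiv (hg.differentiable two_ne_zero)]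
  exact ((hg.fderiv_right (m := 1) (by norm_num)).clm_apply contDiff_const).differentiable one_ne_zero

/-- The matrix local relation for the Guyer–Krumhansl system:
`∂ₜ[e^{−ikx}·exp(Λ(k)t)·u] − ∂ₓ[e^{−ikx}·exp(Λ(k)t)·(Xu)] = e^{−ikx}·exp(Λ(k)t)·F`. -/
theorem GK_matrix_local_relation
    (τ α μ β θ : ℝ) (hτ : 0 < τ) (hα : 0 < α) (hμ : 0 < μ)
    (hβ : β = α / τ) (hθ : θ = μ^2 / τ) (k : ℂ)
    (e q f : ℝ × ℝ → ℂ)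
    (he : ContDiff ℝ 2 e) (hq : ContDiff ℝ 2 q) (hf : ContDiff ℝ 2 f)
    (hbalance : ∀ p : ℝ × ℝ, pt e p + px q p = f p)
    (hconstitutive : ∀ p : ℝ × ℝ,
      (τ : ℂ) * pt q p + q p - (μ : ℂ)^2 * px (px q) p + (α : ℂ) * px e p = 0)
    (u F Xu : ℝ × ℝ → Fin 2 → ℂ)
    (hu : ∀ p : ℝ × ℝ, u p = ![e p, q p])
    (hF : ∀ p : ℝ × ℝ, F p = ![f p, 0])
    (hXu : ∀ p : ℝ × ℝ,
      Xu p = ![-q p, -(β : ℂ) * e p + (θ : ℂ) * (I * k * q p + px q p)]) :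
    ∀ p : ℝ × ℝ,
      pt (fun p => Complex.exp (-(I * k * (p.1 : ℂ))) •
            (NormedSpace.exp ((p.2 : ℂ) • GKLambda τ β θ k)).mulVec (u p)) p
      - px (fun p => Complex.exp (-(I * k * (p.1 : ℂ))) •
            (NormedSpace.exp ((p.2 : ℂ) • GKLambda τ β θ k)).mulVec (Xu p)) p
      = Complex.exp (-(I * k * (p.1 : ℂ))) •
          (NormedSpace.exp ((p.2 : ℂ) • GKLambda τ β θ k)).mulVec (F p) := by
  rintro ⟨x, t⟩
  set A := GKLambda τ β θ k with hA
  set Ey := NormedSpace.exp ((t : ℂ) • A) with hEy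
  set c0 := Complex.exp (-(I * k * (x : ℂ))) with hc0
  have hτc : (τ : ℂ) ≠ 0 := Complex.ofReal_ne_zero.mpr hτ.ne'
  have hed : Differentiable ℝ e := he.differentiable two_ne_zero
  have hqd : Differentiable ℝ q := hq.differentiable two_ne_zero
  have hpxq : Differentiable ℝ (px q) := px_differentiable hq
  have het := hasDerivAt_pt' hed x t
  have hqt := hasDerivAt_pt' hqd x t
  have hex := hasDerivAt_px' hed x t
  have hqx := hasDerivAt_px' hqd x t
  have hpxqx := hasDerivAt_px' hpxq x t
  -- time derivative
  have H1 : HasDerivAt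
      (fun t' : ℝ => c0 • (NormedSpace.exp ((t' : ℂ) • A)).mulVec (u (x, t')))
      (fun i => c0 * (((Ey * A) i 0 * e (x, t) + Ey i 0 * pt e (x, t)) +
        ((Ey * A) i 1 * q (x, t) + Ey i 1 * pt q (x, t)))) t := by
    refine hasDerivAt_pi.2 fun i => ?_
    simp only [hu, Pi.smul_apply, smul_eq_mul, Matrix.mulVec, dotProduct,
      Fin.sum_univ_two, Matrix.cons_val_zero, Matrix.cons_val_one, Matrix.head_cons]
    exact (((entry_hasDerivAt A t i 0).mul het).add
      ((entry_hasDerivAt A t i 1).mul hqt)).const_mul c0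
  -- space derivative
  have hc : HasDerivAt (fun x' : ℝ => Complex.exp (-(I * k * (x' : ℂ))))
      (Complex.exp (-(I * k * (x:ℂ))) * -(I * k * 1)) x := by
    have : HasDerivAt (fun z : ℂ => Complex.exp (-(I * k * z)))
        (Complex.exp (-(I * k * (x:ℂ))) * -(I * k * 1)) (x : ℂ) :=
      (((hasDerivAt_id (x : ℂ)).const_mul (I * k)).neg).cexp
    exact this.comp_ofReal
  have H2 : HasDerivAt
      (fun x' : ℝ => Complex.exp (-(I * k * (x' : ℂ))) • Ey.mulVec (Xu (x', t)))
      (fun i => (Complex.exp (-(I * k * (x:ℂ))) * -(I * k * 1)) *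
          (Ey i 0 * -q (x, t) + Ey i 1 *
            (-(β : ℂ) * e (x, t) + (θ : ℂ) * (I * k * q (x, t) + px q (x, t))))
        + c0 * (Ey i 0 * -px q (x, t) + Ey i 1 *
            (-(β : ℂ) * px e (x, t) + (θ : ℂ) * (I * k * px q (x, t) + px (px q) (x, t))))) x := by
    refine hasDerivAt_pi.2 fun i => ?_
    simp only [hXu, Pi.smul_apply, smul_eq_mul, Matrix.mulVec, dotProduct,
      Fin.sum_univ_two, Matrix.cons_val_zero, Matrix.cons_val_one, Matrix.head_cons]
    exact hc.mul ((hqx.neg.const_mul (Ey i 0)).add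
      (((hex.const_mul (-(β:ℂ))).add
        (((hqx.const_mul (I*k)).add hpxqx).const_mul (θ:ℂ))).const_mul (Ey i 1)))
  have e1 : pt (fun p : ℝ × ℝ => Complex.exp (-(I * k * (p.1 : ℂ))) •
      (NormedSpace.exp ((p.2 : ℂ) • GKLambda τ β θ k)).mulVec (u p)) (x, t)
      = (fun i => c0 * (((Ey * A) i 0 * e (x, t) + Ey i 0 * pt e (x, t)) +
        ((Ey * A) i 1 * q (x, t) + Ey i 1 * pt q (x, t)))) := H1.deriv
  have e2 : px (fun p : ℝ × ℝ => Complex.exp (-(I * k * (p.1 : ℂ))) •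
      (NormedSpace.exp ((p.2 : ℂ) • GKLambda τ β θ k)).mulVec (Xu p)) (x, t)
      = (fun i => (Complex.exp (-(I * k * (x:ℂ))) * -(I * k * 1)) *
          (Ey i 0 * -q (x, t) + Ey i 1 *
            (-(β : ℂ) * e (x, t) + (θ : ℂ) * (I * k * q (x, t) + px q (x, t))))
        + c0 * (Ey i 0 * -px q (x, t) + Ey i 1 *
            (-(β : ℂ) * px e (x, t) + (θ : ℂ) * (I * k * px q (x, t) + px (px q) (x, t))))) :=
    H2.deriv
  rw [e1, e2, hF]
  have h1 := hbalance (x, t)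
  have h2 := hconstitutive (x, t)
  have hβ' : (β : ℂ) = (α : ℂ) / (τ : ℂ) := by rw [hβ]; push_cast; ring
  have hθ' : (θ : ℂ) = (μ : ℂ)^2 / (τ : ℂ) := by rw [hθ]; push_cast; ring
  funext i
  simp only [Pi.sub_apply, Pi.smul_apply, smul_eq_mul, Matrix.mulVec, dotProduct,
    Fin.sum_univ_two, Matrix.cons_val_zero, Matrix.cons_val_one, Matrix.head_cons,
    Matrix.mul_apply, hA, GKLambda, Matrix.of_apply, Matrix.cons_val', Matrix.empty_val',
    Matrix.cons_val_fin_one]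
  rw [hβ', hθ']
  field_simp
  linear_combination (c0 * Ey i 0 * (τ:ℂ)) * h1 + (c0 * Ey i 1) * h2 + (c0 * Ey i 1 * k^2 * (μ:ℂ)^2 * q (x,t)) * Complex.I_sq
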